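/- (Lemma 'Growth curve'.) For any constants M̄, h, ε > 0 there exist ε′ > 0 and n₁ ∈ ℕ with the following property. Let n > n₁, let A₁, …, A_n ∈ SL(2,ℝ) satisfy ‖A_i‖ ≤ M̄ for all i, let L₀ = 0, L₁, …, L_n be an (h, n·ε′)-growing sequence, let 0 ≤ m₀ ≤ m₁ ≤ n be such that the part [m₀, m₁] of the product A_n⋯A₁ is (L, n·ε′)-hyperbolic, and let v₀ ∈ ℝ² ∖ {0} be such that v_{m₀} has the least norm among v_{m₀}, v_{m₀+1}, …, v_{m₁} (i.e. |v_{m₀}| ≤ |v_m| for all m ∈ {m₀, …, m₁}). Then for every m ∈ {m₀, m₀+1, …, m₁}: |log|v_m| − log|v_{m₀}| − (L_m − L_{m₀})| ≤ n·ε. -/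

import Mathlib

set_option maxHeartbeats 1000000

noncomputable section

/-- The space of 2 × 2 real matrices. -/
abbrev Mat2 : Type := Matrix (Fin 2) (Fin 2) ℝ

/-- The Euclidean norm of a vector in `ℝ²`. -/
def vnorm (v : Fin 2 → ℝ) : ℝ := Real.sqrt (v 0 ^ 2 + v 1 ^ 2)

/-- The Euclidean operator norm of a 2 × 2 real matrix. -/
def mnorm (A : Mat2) : ℝ := ‖LinearMap.toContinuousLinearMap (Matrix.toEuclideanLin A)‖

/-- `dblock A m m' = A_{m'} ⋯ A_{m+1}` (so `dblock A m m = 1`); in particular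
`dblock A 0 m = A_m ⋯ A_1`, and `v_m = dblock A 0 m *ᵥ v₀`. -/
def dblock (A : ℕ → Mat2) (m m' : ℕ) : Mat2 :=
  (((List.range' (m + 1) (m' - m)).map A).reverse).prod

open Matrix Real

lemma vnorm_eq (v : Fin 2 → ℝ) : vnorm v = ‖(WithLp.equiv 2 (Fin 2 → ℝ)).symm v‖ := by
  rw [EuclideanSpace.norm_eq, Fin.sum_univ_two]
  simp [vnorm, sq_abs]

lemma vnorm_eq' (x : EuclideanSpace ℝ (Fin 2)) : ‖x‖ = vnorm ((WithLp.equiv 2 (Fin 2 → ℝ)) x) := by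
  rw [vnorm_eq]; simp

lemma vnorm_nonneg (v : Fin 2 → ℝ) : 0 ≤ vnorm v := Real.sqrt_nonneg _

lemma vnorm_sq (v : Fin 2 → ℝ) : vnorm v ^ 2 = v 0 ^ 2 + v 1 ^ 2 :=
  Real.sq_sqrt (by positivity)

lemma vnorm_pos (v : Fin 2 → ℝ) (hv : v ≠ 0) : 0 < vnorm v := by
  rcases eq_or_lt_of_le (vnorm_nonneg v) with h | h
  · exfalso; apply hv
    have h2 := vnorm_sq v
    rw [← h] at h2
    have h0 : v 0 = 0 := by nlinarith [sq_nonneg (v 0), sq_nonneg (v 1)]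
    have h1 : v 1 = 0 := by nlinarith [sq_nonneg (v 0), sq_nonneg (v 1)]
    funext i; fin_cases i <;> assumption
  · exact h

lemma vnorm_mulVec_le (A : Mat2) (v : Fin 2 → ℝ) : vnorm (A *ᵥ v) ≤ mnorm A * vnorm v := by
  rw [vnorm_eq, vnorm_eq]
  have := ContinuousLinearMap.le_opNorm (LinearMap.toContinuousLinearMap (Matrix.toEuclideanLin A)) ((WithLp.equiv 2 (Fin 2 → ℝ)).symm v)
  simpa [mnorm, Matrix.toEuclideanLin_apply_piLp_toLp, Matrix.toLin'_apply] using this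

lemma mnorm_le_bound (A : Mat2) (c : ℝ) (hc : 0 ≤ c)
    (h : ∀ v : Fin 2 → ℝ, vnorm (A *ᵥ v) ≤ c * vnorm v) : mnorm A ≤ c := by
  apply ContinuousLinearMap.opNorm_le_bound _ hc
  intro x
  have := h ((WithLp.equiv 2 (Fin 2 → ℝ)) x)
  rw [vnorm_eq, vnorm_eq] at this
  simpa [Matrix.toEuclideanLin_apply, Matrix.toLin'_apply] using this

lemma mnorm_nonneg (A : Mat2) : 0 ≤ mnorm A := norm_nonneg _

lemma mulVec_apply0 (A : Mat2) (v : Fin 2 → ℝ) : (A *ᵥ v) 0 = A 0 0 * v 0 + A 0 1 * v 1 := by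
  simp [Matrix.mulVec, dotProduct, Fin.sum_univ_two]

lemma mulVec_apply1 (A : Mat2) (v : Fin 2 → ℝ) : (A *ᵥ v) 1 = A 1 0 * v 0 + A 1 1 * v 1 := by
  simp [Matrix.mulVec, dotProduct, Fin.sum_univ_two]

lemma mnorm_one : mnorm (1 : Mat2) = 1 := by
  apply le_antisymm
  · apply mnorm_le_bound _ _ zero_le_one
    intro v; rw [Matrix.one_mulVec, one_mul]
  · have h1 := vnorm_mulVec_le (1 : Mat2) ![1, 0]
    rw [Matrix.one_mulVec] at h1
    have h2 : vnorm ![(1:ℝ), 0] = 1 := by unfold vnorm; norm_num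
    rw [h2, mul_one] at h1; exact h1

lemma dot_le (v w : Fin 2 → ℝ) : v 0 * w 0 + v 1 * w 1 ≤ vnorm v * vnorm w := by
  have hnn : 0 ≤ vnorm v * vnorm w := mul_nonneg (vnorm_nonneg v) (vnorm_nonneg w)
  have hp : (vnorm v * vnorm w) ^ 2 = (v 0 ^2 + v 1 ^2) * (w 0 ^2 + w 1 ^2) := by
    rw [mul_pow, vnorm_sq, vnorm_sq]
  nlinarith [sq_nonneg (v 0 * w 1 - v 1 * w 0), sq_nonneg (v 0 * w 0 + v 1 * w 1)]

lemma mnorm_transpose_le (A : Mat2) : mnorm Aᵀ ≤ mnorm A := by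
  apply mnorm_le_bound _ _ (mnorm_nonneg A)
  intro u
  rcases le_or_gt (vnorm (Aᵀ *ᵥ u)) 0 with hle | hpos
  · exact le_trans hle (mul_nonneg (mnorm_nonneg A) (vnorm_nonneg u))
  · have key : vnorm (Aᵀ *ᵥ u) ^ 2 ≤ vnorm u * (mnorm A * vnorm (Aᵀ *ᵥ u)) := by
      have h1 : vnorm (Aᵀ *ᵥ u) ^ 2 = u 0 * (A *ᵥ (Aᵀ *ᵥ u)) 0 + u 1 * (A *ᵥ (Aᵀ *ᵥ u)) 1 := by
        simp only [vnorm_sq, mulVec_apply0, mulVec_apply1, Matrix.transpose_apply]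
        ring
      rw [h1]
      calc u 0 * (A *ᵥ (Aᵀ *ᵥ u)) 0 + u 1 * (A *ᵥ (Aᵀ *ᵥ u)) 1
          ≤ vnorm u * vnorm (A *ᵥ (Aᵀ *ᵥ u)) := dot_le _ _
        _ ≤ vnorm u * (mnorm A * vnorm (Aᵀ *ᵥ u)) :=
            mul_le_mul_of_nonneg_left (vnorm_mulVec_le _ _) (vnorm_nonneg u)
    nlinarith [vnorm_nonneg u, mnorm_nonneg A]

lemma vnorm_eq_of {v w : Fin 2 → ℝ} (h : v 0 ^2 + v 1 ^2 = w 0 ^2 + w 1 ^2) :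
    vnorm v = vnorm w := by unfold vnorm; rw [h]

def adjB (A : Mat2) : Mat2 := ![![A 1 1, -(A 0 1)], ![-(A 1 0), A 0 0]]

lemma adjB_mul (A : Mat2) (hdet : A.det = 1) : adjB A * A = 1 := by
  rw [Matrix.det_fin_two] at hdet
  ext i j
  fin_cases i <;> fin_cases j <;> rw [Matrix.mul_apply] <;>
    simp [adjB, Matrix.mul_apply, Fin.sum_univ_two, Matrix.one_apply] <;> linarith

lemma mnorm_adjB_le (A : Mat2) : mnorm (adjB A) ≤ mnorm A := by
  apply mnorm_le_bound _ _ (mnorm_nonneg A)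
  intro w
  have h1 : vnorm (adjB A *ᵥ w) = vnorm (Aᵀ *ᵥ ![w 1, -(w 0)]) := by
    apply vnorm_eq_of
    simp only [mulVec_apply0, mulVec_apply1, adjB, Matrix.transpose_apply]
    simp [Fin.sum_univ_two, Matrix.mulVec, dotProduct]
    ring
  have h2 : vnorm ![w 1, -(w 0)] = vnorm w := by
    apply vnorm_eq_of; simp; ring
  calc vnorm (adjB A *ᵥ w) = vnorm (Aᵀ *ᵥ ![w 1, -(w 0)]) := h1
    _ ≤ mnorm Aᵀ * vnorm ![w 1, -(w 0)] := vnorm_mulVec_le _ _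
    _ = mnorm Aᵀ * vnorm w := by rw [h2]
    _ ≤ mnorm A * vnorm w := mul_le_mul_of_nonneg_right (mnorm_transpose_le A) (vnorm_nonneg w)

lemma vnorm_le_mnorm_mul (A : Mat2) (hdet : A.det = 1) (v : Fin 2 → ℝ) :
    vnorm v ≤ mnorm A * vnorm (A *ᵥ v) := by
  have hv : v = adjB A *ᵥ (A *ᵥ v) := by
    rw [Matrix.mulVec_mulVec, adjB_mul A hdet, Matrix.one_mulVec]
  calc vnorm v = vnorm (adjB A *ᵥ (A *ᵥ v)) := by rw [← hv]
    _ ≤ mnorm (adjB A) * vnorm (A *ᵥ v) := vnorm_mulVec_le _ _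
    _ ≤ mnorm A * vnorm (A *ᵥ v) :=
        mul_le_mul_of_nonneg_right (mnorm_adjB_le A) (vnorm_nonneg _)

lemma vnorm_e0 : vnorm ![(1:ℝ), 0] = 1 := by
  unfold vnorm; norm_num

lemma one_le_mnorm (A : Mat2) (hdet : A.det = 1) : 1 ≤ mnorm A := by
  have h1 := vnorm_le_mnorm_mul A hdet ![1, 0]
  have h2 := vnorm_mulVec_le A ![1, 0]
  rw [vnorm_e0] at h1 h2
  rw [mul_one] at h2
  nlinarith [mnorm_nonneg A, vnorm_nonneg (A *ᵥ ![(1:ℝ), 0])]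

lemma vnorm_add_le (v w : Fin 2 → ℝ) : vnorm (v + w) ≤ vnorm v + vnorm w := by
  have h := dot_le v w
  have h1 := vnorm_sq v; have h2 := vnorm_sq w
  have hs : (v+w) 0 ^2 + (v+w) 1 ^2 ≤ (vnorm v + vnorm w)^2 := by
    simp only [Pi.add_apply]; nlinarith
  calc vnorm (v+w) = Real.sqrt ((v+w) 0 ^2 + (v+w) 1 ^2) := rfl
    _ ≤ Real.sqrt ((vnorm v + vnorm w)^2) := Real.sqrt_le_sqrt hs
    _ = vnorm v + vnorm w := Real.sqrt_sq (add_nonneg (vnorm_nonneg v) (vnorm_nonneg w))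

lemma vnorm_smul (a : ℝ) (v : Fin 2 → ℝ) : vnorm (a • v) = |a| * vnorm v := by
  unfold vnorm
  simp only [Pi.smul_apply, smul_eq_mul]
  rw [show (a * v 0)^2 + (a * v 1)^2 = a^2 * (v 0 ^2 + v 1 ^2) by ring,
    Real.sqrt_mul (sq_nonneg a), Real.sqrt_sq_eq_abs]

lemma exists_max_vec (A : Mat2) :
    ∃ u : Fin 2 → ℝ, vnorm u = 1 ∧ vnorm (A *ᵥ u) = mnorm A := by
  set T := LinearMap.toContinuousLinearMap (Matrix.toEuclideanLin A) with hT
  have hcs : IsCompact (Metric.sphere (0 : EuclideanSpace ℝ (Fin 2)) 1) := isCompact_sphere _ _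
  have hne : (Metric.sphere (0 : EuclideanSpace ℝ (Fin 2)) 1).Nonempty :=
    NormedSpace.sphere_nonempty.mpr zero_le_one
  have hcont : ContinuousOn (fun x : EuclideanSpace ℝ (Fin 2) => ‖T x‖)
      (Metric.sphere 0 1) := (T.continuous.norm).continuousOn
  obtain ⟨x₀, hx₀mem, hx₀max⟩ := hcs.exists_isMaxOn hne hcont
  have hx₀ : ‖x₀‖ = 1 := by simpa using hx₀mem
  have hTnorm : ‖T‖ = ‖T x₀‖ := by
    apply le_antisymm
    · apply T.opNorm_le_bound (norm_nonneg _)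
      intro x
      rcases eq_or_ne x 0 with rfl | hx
      · simp
      · have hxn : ‖x‖ ≠ 0 := norm_ne_zero_iff.mpr hx
        have hmem : (‖x‖⁻¹ • x) ∈ Metric.sphere (0 : EuclideanSpace ℝ (Fin 2)) 1 := by
          simp [norm_smul, hxn, abs_of_nonneg (norm_nonneg x), inv_mul_cancel₀ hxn]
        have h5 : ‖T (‖x‖⁻¹ • x)‖ ≤ ‖T x₀‖ := hx₀max hmem
        rw [_root_.map_smul, norm_smul, norm_inv, norm_norm] at h5
        calc ‖T x‖ = ‖x‖ * (‖x‖⁻¹ * ‖T x‖) := by field_simp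
          _ ≤ ‖x‖ * ‖T x₀‖ := by
              apply mul_le_mul_of_nonneg_left _ (norm_nonneg x)
              simpa using h5
          _ = ‖T x₀‖ * ‖x‖ := mul_comm _ _
    · calc ‖T x₀‖ ≤ ‖T‖ * ‖x₀‖ := T.le_opNorm x₀
        _ = ‖T‖ := by rw [hx₀, mul_one]
  refine ⟨(WithLp.equiv 2 (Fin 2 → ℝ)) x₀, ?_, ?_⟩
  · rw [vnorm_eq]; simpa using hx₀
  · rw [vnorm_eq]
    have happ : T x₀ = (WithLp.equiv 2 (Fin 2 → ℝ)).symm (A *ᵥ (WithLp.equiv 2 (Fin 2 → ℝ)) x₀) := by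
      rw [hT]
      simp [Matrix.toEuclideanLin_apply]
    rw [← happ, ← hTnorm]
    rfl

lemma sq_eq_one_nonneg {x : ℝ} (h : x ^ 2 = 1) (hx : 0 ≤ x) : x = 1 := by
  have := Real.sqrt_sq hx
  rw [h, Real.sqrt_one] at this; exact this.symm

lemma my_le_of_sq_le_sq {x y : ℝ} (h : x ^ 2 ≤ y ^ 2) (hx : 0 ≤ x) (hy : 0 ≤ y) : x ≤ y := by
  nlinarith

lemma svd (D : Mat2) (hdet : D.det = 1) :
    ∃ up um : Fin 2 → ℝ, vnorm up = 1 ∧ vnorm um = 1 ∧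
      vnorm (D *ᵥ up) = mnorm D ∧ mnorm D * vnorm (D *ᵥ um) = 1 ∧
      ∀ v : Fin 2 → ℝ, ∃ a b : ℝ, v = a • up + b • um ∧ a ^ 2 + b ^ 2 = vnorm v ^ 2 ∧
        |a| * mnorm D ≤ vnorm (D *ᵥ v) := by
  obtain ⟨u, hu1, humax⟩ := exists_max_vec D
  have hcs : u 0 ^ 2 + u 1 ^ 2 = 1 := by rw [← vnorm_sq, hu1]; norm_num
  set c := u 0 with hc
  set σ := u 1 with hσ
  set um : Fin 2 → ℝ := ![-σ, c] with hum
  have hum0 : um 0 = -σ := rfl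
  have hum1 : um 1 = c := rfl
  have humn : vnorm um = 1 := by
    rw [← hu1]; unfold vnorm; rw [hum0, hum1, ← hc, ← hσ]; ring_nf
  -- coordinates of images
  set α : ℝ := (D *ᵥ u) 0 ^ 2 + (D *ᵥ u) 1 ^ 2 with hα
  set γ : ℝ := (D *ᵥ um) 0 ^ 2 + (D *ᵥ um) 1 ^ 2 with hγ
  set β : ℝ := (D *ᵥ u) 0 * (D *ᵥ um) 0 + (D *ᵥ u) 1 * (D *ᵥ um) 1 with hβ
  have hαv : vnorm (D *ᵥ u) ^ 2 = α := vnorm_sq _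
  have hγv : vnorm (D *ᵥ um) ^ 2 = γ := vnorm_sq _
  have hα0 : 0 ≤ α := by rw [← hαv]; positivity
  -- quadratic form expansion
  have Hq : ∀ x y : ℝ, vnorm (D *ᵥ (x • u + y • um)) ^ 2
      = x ^ 2 * α + 2 * x * y * β + y ^ 2 * γ := by
    intro x y
    rw [vnorm_sq, hα, hβ, hγ]
    simp only [mulVec_apply0, mulVec_apply1, Pi.add_apply, Pi.smul_apply, smul_eq_mul,
      hum0, hum1]
    ring
  -- scaled boundedness of the quadratic form
  have HB' : ∀ x y : ℝ, x ^ 2 * α + 2 * x * y * β + y ^ 2 * γ ≤ (x ^ 2 + y ^ 2) * α := by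
    intro x y
    have hw2 : vnorm (x • u + y • um) ^ 2 = x ^ 2 + y ^ 2 := by
      rw [vnorm_sq]
      simp only [Pi.add_apply, Pi.smul_apply, smul_eq_mul, hum0, hum1]
      linear_combination (x ^ 2 + y ^ 2) * hcs
    have h1 : vnorm (D *ᵥ (x • u + y • um)) ≤ mnorm D * vnorm (x • u + y • um) :=
      vnorm_mulVec_le _ _
    have h2 := pow_le_pow_left₀ (vnorm_nonneg _) h1 2
    rw [Hq x y, mul_pow, hw2, ← humax, hαv] at h2
    nlinarith [h2]
  -- orthogonality
  have hβ0 : β = 0 := by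
    have h1 := HB' (α - γ + 2) (2 * β)
    have h2 : β ^ 2 ≤ 0 := by nlinarith [h1]
    have h3 : β ^ 2 = 0 := le_antisymm h2 (sq_nonneg β)
    exact pow_eq_zero_iff (by norm_num) |>.mp h3
  -- determinant / Lagrange identity
  have hd : D 0 0 * D 1 1 - D 0 1 * D 1 0 = 1 := by
    rw [← Matrix.det_fin_two]; exact hdet
  have hcross : (D *ᵥ u) 0 * (D *ᵥ um) 1 - (D *ᵥ u) 1 * (D *ᵥ um) 0 = 1 := by
    simp only [mulVec_apply0, mulVec_apply1, hum0, hum1]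
    linear_combination (c ^ 2 + σ ^ 2) * hd + hcs
  have hαγ : α * γ = 1 := by
    have hlag : α * γ = β ^ 2 +
        ((D *ᵥ u) 0 * (D *ᵥ um) 1 - (D *ᵥ u) 1 * (D *ᵥ um) 0) ^ 2 := by
      rw [hα, hβ, hγ]; ring
    rw [hcross, hβ0] at hlag
    rw [hlag]; norm_num
  have hprod : mnorm D * vnorm (D *ᵥ um) = 1 := by
    apply sq_eq_one_nonneg
    · rw [mul_pow, ← humax, hαv, hγv, hαγ]
    · exact mul_nonneg (mnorm_nonneg D) (vnorm_nonneg _)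
  refine ⟨u, um, hu1, humn, humax, hprod, ?_⟩
  intro v
  have e0 : ((c * v 0 + σ * v 1) • u + (-σ * v 0 + c * v 1) • um) 0 = v 0 := by
    simp only [Pi.add_apply, Pi.smul_apply, smul_eq_mul, hum0, ← hc]
    linear_combination (v 0) * hcs
  have e1 : ((c * v 0 + σ * v 1) • u + (-σ * v 0 + c * v 1) • um) 1 = v 1 := by
    simp only [Pi.add_apply, Pi.smul_apply, smul_eq_mul, hum1, ← hσ]
    linear_combination (v 1) * hcs
  have hveq : v = (c * v 0 + σ * v 1) • u + (-σ * v 0 + c * v 1) • um := by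
    funext i
    fin_cases i
    · exact e0.symm
    · exact e1.symm
  set a := c * v 0 + σ * v 1 with ha
  set b := -σ * v 0 + c * v 1 with hb
  refine ⟨a, b, hveq, ?_, ?_⟩
  · rw [vnorm_sq, ha, hb]; linear_combination (v 0 ^ 2 + v 1 ^ 2) * hcs
  · have h1 : vnorm (D *ᵥ v) ^ 2 = a ^ 2 * α + b ^ 2 * γ := by
      rw [hveq, Hq a b, hβ0]; ring
    have hγ0 : 0 ≤ γ := by rw [← hγv]; positivity
    apply my_le_of_sq_le_sq _ (mul_nonneg (abs_nonneg _) (mnorm_nonneg D)) (vnorm_nonneg _)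
    rw [h1, mul_pow, sq_abs, ← humax, hαv]
    nlinarith [sq_nonneg b]

lemma dblock_self (A : ℕ → Mat2) (m : ℕ) : dblock A m m = 1 := by
  simp [dblock]

lemma dblock_one (A : ℕ → Mat2) (m : ℕ) : dblock A m (m + 1) = A (m + 1) := by
  simp [dblock]

lemma dblock_comp (A : ℕ → Mat2) {m m'' m' : ℕ} (h1 : m ≤ m'') (h2 : m'' ≤ m') :
    dblock A m'' m' * dblock A m m'' = dblock A m m' := by
  have hr : List.range' (m + 1) (m'' - m) ++ List.range' (m'' + 1) (m' - m'') =
      List.range' (m + 1) (m' - m) := by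
    have h := List.range'_append (s := m + 1) (m := m'' - m) (n := m' - m'') (step := 1)
    rw [show m + 1 + 1 * (m'' - m) = m'' + 1 by omega,
      show m'' - m + (m' - m'') = m' - m by omega] at h
    exact h
  unfold dblock
  rw [← hr, List.map_append, List.reverse_append, List.prod_append]

lemma det_list_prod' (l : List Mat2) (h : ∀ B ∈ l, B.det = 1) : l.prod.det = 1 := by
  induction l with
  | nil => simp
  | cons x xs ih =>
    rw [List.prod_cons, Matrix.det_mul, h x List.mem_cons_self,
      ih (fun B hB => h B (List.mem_cons_of_mem x hB)), one_mul]

lemma dblock_det (A : ℕ → Mat2) {n m m' : ℕ} (h0 : m ≤ m') (h : m' ≤ n)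
    (hA : ∀ i : ℕ, 1 ≤ i → i ≤ n → (A i).det = 1) : (dblock A m m').det = 1 := by
  unfold dblock
  apply det_list_prod'
  intro B hB
  rw [List.mem_reverse, List.mem_map] at hB
  obtain ⟨i, hi, rfl⟩ := hB
  rw [List.mem_range'_1] at hi
  exact hA i (by omega) (by omega)

theorem stmt_15 (Mbar h ε : ℝ) (hM : 0 < Mbar) (hh : 0 < h) (hε : 0 < ε) :
    ∃ ε' : ℝ, 0 < ε' ∧ ∃ n₁ : ℕ, ∀ n : ℕ, n₁ < n →
      ∀ A : ℕ → Mat2, (∀ i : ℕ, 1 ≤ i → i ≤ n → (A i).det = 1 ∧ mnorm (A i) ≤ Mbar) →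
      ∀ L : ℕ → ℝ, L 0 = 0 →
      -- `L` is `(h, n·ε')`-growing
      (∀ m m' : ℕ, m < m' → m' ≤ n → h * ((m' : ℝ) - (m : ℝ)) - (n : ℝ) * ε' ≤ L m' - L m) →
      ∀ m₀ m₁ : ℕ, m₀ ≤ m₁ → m₁ ≤ n →
      -- the part `[m₀, m₁]` of the product is `(L, n·ε')`-hyperbolic
      (∀ m m' : ℕ, m₀ ≤ m → m < m' → m' ≤ m₁ →
        |Real.log (mnorm (dblock A m m')) - (L m' - L m)| ≤ (n : ℝ) * ε') →
      ∀ v₀ : Fin 2 → ℝ, v₀ ≠ 0 →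
      -- `v_{m₀}` has the least norm among `v_{m₀}, …, v_{m₁}`
      (∀ m : ℕ, m₀ ≤ m → m ≤ m₁ →
        vnorm ((dblock A 0 m₀).mulVec v₀) ≤ vnorm ((dblock A 0 m).mulVec v₀)) →
      ∀ m : ℕ, m₀ ≤ m → m ≤ m₁ →
        |Real.log (vnorm ((dblock A 0 m).mulVec v₀)) -
          Real.log (vnorm ((dblock A 0 m₀).mulVec v₀)) - (L m - L m₀)| ≤ (n : ℝ) * ε := by
  have hε8 : 0 < ε / 8 := by positivity
  refine ⟨ε / 8, hε8, ⌈(max (Real.log 2) (Real.log (2 * Mbar))) / (ε / 8)⌉₊, ?_⟩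
  intro n hn A hA L hL0 hgrow m₀ m₁ hm01 hm1n hhyp v₀ hv₀ hmin m hm0 hm1
  set δ := (n : ℝ) * (ε / 8) with hδdef
  have hnn : ((⌈(max (Real.log 2) (Real.log (2 * Mbar))) / (ε / 8)⌉₊ : ℝ)) ≤ (n : ℝ) :=
    Nat.cast_le.mpr (le_of_lt hn)
  have hmax : max (Real.log 2) (Real.log (2 * Mbar)) ≤ δ := by
    have h1 := Nat.le_ceil ((max (Real.log 2) (Real.log (2 * Mbar))) / (ε / 8))
    have h2 : max (Real.log 2) (Real.log (2 * Mbar)) / (ε / 8) ≤ (n : ℝ) := le_trans h1 hnn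
    rw [div_le_iff₀ hε8] at h2
    linarith
  have hlog2 : Real.log 2 ≤ δ := le_trans (le_max_left _ _) hmax
  have hlog2M : Real.log (2 * Mbar) ≤ δ := le_trans (le_max_right _ _) hmax
  have hlog2pos : (0 : ℝ) < Real.log 2 := Real.log_pos (by norm_num)
  have hδpos : 0 < δ := lt_of_lt_of_le hlog2pos hlog2
  have hne : (n : ℝ) * ε = 8 * δ := by rw [hδdef]; ring
  have hAdet : ∀ i : ℕ, 1 ≤ i → i ≤ n → (A i).det = 1 := fun i h1 h2 => (hA i h1 h2).1
  have hdet : ∀ {k k' : ℕ}, k ≤ k' → k' ≤ n → (dblock A k k').det = 1 :=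
    fun {k k'} h1 h2 => dblock_det A h1 h2 hAdet
  have hVpos : ∀ k : ℕ, k ≤ n → 0 < vnorm (dblock A 0 k *ᵥ v₀) := by
    intro k hk
    have h1 := vnorm_le_mnorm_mul (dblock A 0 k) (hdet (Nat.zero_le k) hk) v₀
    have h2 := vnorm_pos v₀ hv₀
    nlinarith [mnorm_nonneg (dblock A 0 k), vnorm_nonneg (dblock A 0 k *ᵥ v₀)]
  have hcomp : ∀ (k k' k'' : ℕ), k ≤ k' → k' ≤ k'' → ∀ w : Fin 2 → ℝ,
      dblock A k k'' *ᵥ w = dblock A k' k'' *ᵥ (dblock A k k' *ᵥ w) := by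
    intro k k' k'' h1 h2 w
    rw [Matrix.mulVec_mulVec, dblock_comp A h1 h2]
  have hypU : ∀ k k' : ℕ, m₀ ≤ k → k ≤ k' → k' ≤ m₁ →
      mnorm (dblock A k k') ≤ Real.exp (L k' - L k + δ) := by
    intro k k' h1 h2 h3
    rcases eq_or_lt_of_le h2 with rfl | hlt
    · rw [dblock_self, mnorm_one, sub_self, zero_add]
      exact Real.one_le_exp (le_of_lt hδpos)
    · have h4 := hhyp k k' h1 hlt h3
      rw [abs_le] at h4
      have h5 : 0 < mnorm (dblock A k k') :=
        lt_of_lt_of_le one_pos (one_le_mnorm _ (hdet (le_of_lt hlt) (le_trans h3 hm1n)))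
      calc mnorm (dblock A k k') = Real.exp (Real.log (mnorm (dblock A k k'))) :=
            (Real.exp_log h5).symm
        _ ≤ Real.exp (L k' - L k + δ) := Real.exp_le_exp.mpr (by linarith [h4.2])
  have hypL : ∀ k k' : ℕ, m₀ ≤ k → k ≤ k' → k' ≤ m₁ →
      Real.exp (L k' - L k - δ) ≤ mnorm (dblock A k k') := by
    intro k k' h1 h2 h3
    rcases eq_or_lt_of_le h2 with rfl | hlt
    · rw [dblock_self, mnorm_one, sub_self, zero_sub]
      calc Real.exp (-δ) ≤ Real.exp 0 := Real.exp_le_exp.mpr (by linarith)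
        _ = 1 := Real.exp_zero
    · have h4 := hhyp k k' h1 hlt h3
      rw [abs_le] at h4
      have h5 : 0 < mnorm (dblock A k k') :=
        lt_of_lt_of_le one_pos (one_le_mnorm _ (hdet (le_of_lt hlt) (le_trans h3 hm1n)))
      calc Real.exp (L k' - L k - δ) ≤ Real.exp (Real.log (mnorm (dblock A k k'))) :=
            Real.exp_le_exp.mpr (by linarith [h4.1])
        _ = mnorm (dblock A k k') := Real.exp_log h5
  have hUm : ∀ k, m₀ ≤ k → k ≤ m₁ → vnorm (dblock A 0 k *ᵥ v₀) ≤
      Real.exp (L k - L m₀ + δ) * vnorm (dblock A 0 m₀ *ᵥ v₀) := by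
    intro k h1 h2
    rw [hcomp 0 m₀ k (Nat.zero_le _) h1 v₀]
    calc vnorm (dblock A m₀ k *ᵥ (dblock A 0 m₀ *ᵥ v₀))
        ≤ mnorm (dblock A m₀ k) * vnorm (dblock A 0 m₀ *ᵥ v₀) := vnorm_mulVec_le _ _
      _ ≤ Real.exp (L k - L m₀ + δ) * vnorm (dblock A 0 m₀ *ᵥ v₀) :=
          mul_le_mul_of_nonneg_right (hypU m₀ k le_rfl h1 h2) (vnorm_nonneg _)
  have hRm : ∀ k, m₀ ≤ k → k ≤ m₁ → vnorm (dblock A 0 m₁ *ᵥ v₀) ≤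
      Real.exp (L m₁ - L k + δ) * vnorm (dblock A 0 k *ᵥ v₀) := by
    intro k h1 h2
    rw [hcomp 0 k m₁ (Nat.zero_le _) h2 v₀]
    calc vnorm (dblock A k m₁ *ᵥ (dblock A 0 k *ᵥ v₀))
        ≤ mnorm (dblock A k m₁) * vnorm (dblock A 0 k *ᵥ v₀) := vnorm_mulVec_le _ _
      _ ≤ Real.exp (L m₁ - L k + δ) * vnorm (dblock A 0 k *ᵥ v₀) :=
          mul_le_mul_of_nonneg_right (hypU k m₁ h1 h2 le_rfl) (vnorm_nonneg _)
  have hXpos : 0 < vnorm (dblock A 0 m *ᵥ v₀) := hVpos m (le_trans hm1 hm1n)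
  have hYpos : 0 < vnorm (dblock A 0 m₀ *ᵥ v₀) := hVpos m₀ (le_trans hm01 hm1n)
  -- lower multiplicative bound
  have hlow : Real.exp (L m - L m₀ - 8 * δ) * vnorm (dblock A 0 m₀ *ᵥ v₀)
      ≤ vnorm (dblock A 0 m *ᵥ v₀) := by
    by_cases hcase : L m₁ - L m₀ < 2 * δ + Real.log 2
    · -- short case
      have hL1m : -δ ≤ L m₁ - L m := by
        rcases eq_or_lt_of_le hm1 with rfl | hlt
        · simp [le_of_lt hδpos]
        · have h1 := hgrow m m₁ hlt hm1n
          have h2 : (0 : ℝ) ≤ h * ((m₁ : ℝ) - (m : ℝ)) := by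
            apply mul_nonneg (le_of_lt hh)
            have : (m : ℝ) ≤ (m₁ : ℝ) := Nat.cast_le.mpr hm1
            linarith
          rw [hδdef]; linarith
      have hΔ : L m - L m₀ - 8 * δ ≤ 0 := by linarith
      calc Real.exp (L m - L m₀ - 8 * δ) * vnorm (dblock A 0 m₀ *ᵥ v₀)
          ≤ 1 * vnorm (dblock A 0 m₀ *ᵥ v₀) := by
            apply mul_le_mul_of_nonneg_right _ (vnorm_nonneg _)
            calc Real.exp (L m - L m₀ - 8 * δ) ≤ Real.exp 0 := Real.exp_le_exp.mpr hΔ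
              _ = 1 := Real.exp_zero
        _ = vnorm (dblock A 0 m₀ *ᵥ v₀) := one_mul _
        _ ≤ vnorm (dblock A 0 m *ᵥ v₀) := hmin m hm0 hm1
    · -- long case
      push_neg at hcase
      have hm01lt : m₀ < m₁ := by
        rcases eq_or_lt_of_le hm01 with rfl | hlt
        · exfalso; rw [sub_self] at hcase; linarith
        · exact hlt
      classical
      have hex : ∃ q, m₀ < q ∧ q ≤ m₁ ∧ 2 * δ + Real.log 2 ≤ L q - L m₀ :=
        ⟨m₁, hm01lt, le_rfl, hcase⟩
      set p := Nat.find hex with hpdef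
      obtain ⟨hp0, hp1, hpG⟩ := Nat.find_spec hex
      have hple : p ≤ n := le_trans hp1 hm1n
      have hstep : L p - L (p - 1) ≤ Real.log Mbar + δ := by
        have h5 : p - 1 + 1 = p := by omega
        have hABp : dblock A (p - 1) p = A p := by
          calc dblock A (p - 1) p = dblock A (p - 1) (p - 1 + 1) := by rw [h5]
            _ = A (p - 1 + 1) := dblock_one _ _
            _ = A p := by rw [h5]
        have h4 := hhyp (p - 1) p (by omega) (by omega) hp1
        rw [hABp, abs_le] at h4
        have hApos : 0 < mnorm (A p) :=
          lt_of_lt_of_le one_pos (one_le_mnorm _ (hAdet p (by omega) hple))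
        have hAle : Real.log (mnorm (A p)) ≤ Real.log Mbar :=
          Real.log_le_log hApos ((hA p (by omega) hple).2)
        linarith [h4.2]
      have hlogMbar : Real.log Mbar ≤ δ - Real.log 2 := by
        have hml : Real.log (2 * Mbar) = Real.log 2 + Real.log Mbar :=
          Real.log_mul (by norm_num) (ne_of_gt hM)
        linarith
      have hG4 : L p - L m₀ ≤ 4 * δ := by
        rcases eq_or_lt_of_le (show m₀ ≤ p - 1 by omega) with heq | hlt2
        · have heq2 : L p - L m₀ = L p - L (p - 1) := by rw [heq]
          rw [heq2]; linarith
        · have hmin2 := Nat.find_min hex (show p - 1 < p by omega)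
          have hnotG : L (p - 1) - L m₀ < 2 * δ + Real.log 2 := by
            by_contra hcon
            push_neg at hcon
            exact hmin2 ⟨hlt2, by omega, hcon⟩
          linarith
      -- SVD of the full block
      have hDdet : (dblock A m₀ m₁).det = 1 := hdet hm01 hm1n
      obtain ⟨up, um, hup1, hum1n, hupmax, hprod, hdec⟩ := svd (dblock A m₀ m₁) hDdet
      obtain ⟨a, b, hab, habsq, haD⟩ := hdec (dblock A 0 m₀ *ᵥ v₀)
      have hsl : Real.exp (L m₁ - L m₀ - δ) ≤ mnorm (dblock A m₀ m₁) :=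
        hypL m₀ m₁ le_rfl hm01 le_rfl
      have hspos : 0 < mnorm (dblock A m₀ m₁) := lt_of_lt_of_le (Real.exp_pos _) hsl
      have hrle : vnorm (dblock A m₀ m₁ *ᵥ um) ≤ Real.exp (-(L m₁ - L m₀ - δ)) := by
        rw [Real.exp_neg, inv_eq_one_div, le_div_iff₀ (Real.exp_pos _)]
        calc vnorm (dblock A m₀ m₁ *ᵥ um) * Real.exp (L m₁ - L m₀ - δ)
            ≤ vnorm (dblock A m₀ m₁ *ᵥ um) * mnorm (dblock A m₀ m₁) :=
              mul_le_mul_of_nonneg_left hsl (vnorm_nonneg _)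
          _ = 1 := by rw [mul_comm]; exact hprod
      have hB1 : vnorm (dblock A m₀ p *ᵥ um) ≤ Real.exp (-(L p - L m₀) + 2 * δ) := by
        have hsplit := hcomp m₀ p m₁ (by omega) hp1 um
        have h2 := vnorm_le_mnorm_mul (dblock A p m₁) (hdet hp1 hm1n) (dblock A m₀ p *ᵥ um)
        rw [← hsplit] at h2
        calc vnorm (dblock A m₀ p *ᵥ um)
            ≤ mnorm (dblock A p m₁) * vnorm (dblock A m₀ m₁ *ᵥ um) := h2
          _ ≤ Real.exp (L m₁ - L p + δ) * Real.exp (-(L m₁ - L m₀ - δ)) := by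
              apply mul_le_mul (hypU p m₁ (by omega) hp1 le_rfl) hrle
                (vnorm_nonneg _) (le_of_lt (Real.exp_pos _))
          _ = Real.exp (-(L p - L m₀) + 2 * δ) := by
              rw [← Real.exp_add]; congr 1; ring
      have hTup : vnorm (dblock A m₀ p *ᵥ up) ≤ Real.exp (L p - L m₀ + δ) := by
        calc vnorm (dblock A m₀ p *ᵥ up) ≤ mnorm (dblock A m₀ p) * vnorm up :=
              vnorm_mulVec_le _ _
          _ = mnorm (dblock A m₀ p) := by rw [hup1, mul_one]
          _ ≤ Real.exp (L p - L m₀ + δ) := hypU m₀ p le_rfl (by omega) hp1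
      have hbY : |b| ≤ vnorm (dblock A 0 m₀ *ᵥ v₀) := by
        apply my_le_of_sq_le_sq _ (abs_nonneg b) (vnorm_nonneg _)
        rw [sq_abs]
        nlinarith [sq_nonneg a]
      have hminp : vnorm (dblock A 0 m₀ *ᵥ v₀) ≤ vnorm (dblock A 0 p *ᵥ v₀) :=
        hmin p (by omega) hp1
      have hVp : vnorm (dblock A 0 p *ᵥ v₀) ≤
          |a| * Real.exp (L p - L m₀ + δ) +
          |b| * Real.exp (-(L p - L m₀) + 2 * δ) := by
        rw [hcomp 0 m₀ p (Nat.zero_le _) (by omega) v₀, hab, Matrix.mulVec_add,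
          Matrix.mulVec_smul, Matrix.mulVec_smul]
        calc vnorm (a • (dblock A m₀ p *ᵥ up) + b • (dblock A m₀ p *ᵥ um))
            ≤ vnorm (a • (dblock A m₀ p *ᵥ up)) + vnorm (b • (dblock A m₀ p *ᵥ um)) :=
              vnorm_add_le _ _
          _ = |a| * vnorm (dblock A m₀ p *ᵥ up) + |b| * vnorm (dblock A m₀ p *ᵥ um) := by
              rw [vnorm_smul, vnorm_smul]
          _ ≤ _ := add_le_add
              (mul_le_mul_of_nonneg_left hTup (abs_nonneg a))
              (mul_le_mul_of_nonneg_left hB1 (abs_nonneg b))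
      have hhalf : Real.exp (-(L p - L m₀) + 2 * δ) ≤ 1 / 2 := by
        calc Real.exp (-(L p - L m₀) + 2 * δ) ≤ Real.exp (-Real.log 2) :=
              Real.exp_le_exp.mpr (by linarith)
          _ = 1 / 2 := by
              rw [Real.exp_neg, Real.exp_log (by norm_num : (0:ℝ) < 2)]; norm_num
      have hamain : vnorm (dblock A 0 m₀ *ᵥ v₀) / 2 ≤ |a| * Real.exp (L p - L m₀ + δ) := by
        have h7 : |b| * Real.exp (-(L p - L m₀) + 2 * δ) ≤
            vnorm (dblock A 0 m₀ *ᵥ v₀) * (1 / 2) :=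
          mul_le_mul hbY hhalf (le_of_lt (Real.exp_pos _)) (le_of_lt hYpos)
        linarith
      have haexp : vnorm (dblock A 0 m₀ *ᵥ v₀) / 2 * Real.exp (-(L p - L m₀ + δ)) ≤ |a| := by
        have h8 := mul_le_mul_of_nonneg_right hamain
          (le_of_lt (Real.exp_pos (-(L p - L m₀ + δ))))
        rw [mul_assoc, ← Real.exp_add,
          show L p - L m₀ + δ + -(L p - L m₀ + δ) = 0 by ring, Real.exp_zero, mul_one] at h8
        exact h8
      have ha5 : vnorm (dblock A 0 m₀ *ᵥ v₀) / 2 * Real.exp (-(5 * δ)) ≤ |a| := by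
        refine le_trans ?_ haexp
        apply mul_le_mul_of_nonneg_left (Real.exp_le_exp.mpr (by linarith))
        linarith [hYpos]
      have hend : Real.exp (L m₁ - L m₀ - 7 * δ) * vnorm (dblock A 0 m₀ *ᵥ v₀)
          ≤ vnorm (dblock A 0 m₁ *ᵥ v₀) := by
        have h9 : |a| * mnorm (dblock A m₀ m₁) ≤ vnorm (dblock A 0 m₁ *ᵥ v₀) := by
          rw [hcomp 0 m₀ m₁ (Nat.zero_le _) hm01 v₀]
          exact haD
        have h10 : vnorm (dblock A 0 m₀ *ᵥ v₀) / 2 * Real.exp (-(5 * δ)) *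
            Real.exp (L m₁ - L m₀ - δ) ≤ |a| * mnorm (dblock A m₀ m₁) :=
          mul_le_mul ha5 hsl (le_of_lt (Real.exp_pos _)) (abs_nonneg a)
        have hexpδ : Real.exp (-δ) ≤ 1 / 2 := by
          calc Real.exp (-δ) ≤ Real.exp (-Real.log 2) := Real.exp_le_exp.mpr (by linarith)
            _ = 1 / 2 := by
                rw [Real.exp_neg, Real.exp_log (by norm_num : (0:ℝ) < 2)]; norm_num
        have h11 : Real.exp (L m₁ - L m₀ - 7 * δ) * vnorm (dblock A 0 m₀ *ᵥ v₀) ≤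
            vnorm (dblock A 0 m₀ *ᵥ v₀) / 2 * Real.exp (-(5 * δ)) *
            Real.exp (L m₁ - L m₀ - δ) := by
          have hfa : Real.exp (L m₁ - L m₀ - 7 * δ) =
              Real.exp (-δ) * (Real.exp (-(5 * δ)) * Real.exp (L m₁ - L m₀ - δ)) := by
            rw [← Real.exp_add, ← Real.exp_add]; congr 1; ring
          rw [hfa]
          have hEpos : 0 < Real.exp (-(5 * δ)) * Real.exp (L m₁ - L m₀ - δ) := by positivity
          calc Real.exp (-δ) * (Real.exp (-(5 * δ)) * Real.exp (L m₁ - L m₀ - δ)) *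
                vnorm (dblock A 0 m₀ *ᵥ v₀)
              ≤ 1 / 2 * (Real.exp (-(5 * δ)) * Real.exp (L m₁ - L m₀ - δ)) *
                vnorm (dblock A 0 m₀ *ᵥ v₀) := by
                apply mul_le_mul_of_nonneg_right _ (vnorm_nonneg _)
                exact mul_le_mul_of_nonneg_right hexpδ (le_of_lt hEpos)
            _ = vnorm (dblock A 0 m₀ *ᵥ v₀) / 2 * Real.exp (-(5 * δ)) *
                Real.exp (L m₁ - L m₀ - δ) := by ring
        exact le_trans h11 (le_trans h10 h9)
      -- transfer from m₁ back to m
      have hstep3 : Real.exp (-(L m₁ - L m + δ)) * vnorm (dblock A 0 m₁ *ᵥ v₀) ≤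
          vnorm (dblock A 0 m *ᵥ v₀) := by
        have h6 := mul_le_mul_of_nonneg_left (hRm m hm0 hm1)
          (le_of_lt (Real.exp_pos (-(L m₁ - L m + δ))))
        rw [← mul_assoc, ← Real.exp_add,
          show -(L m₁ - L m + δ) + (L m₁ - L m + δ) = 0 by ring,
          Real.exp_zero, one_mul] at h6
        exact h6
      have harith : -(L m₁ - L m + δ) + (L m₁ - L m₀ - 7 * δ) = L m - L m₀ - 8 * δ := by ring
      have hfb : Real.exp (L m - L m₀ - 8 * δ) =
          Real.exp (-(L m₁ - L m + δ)) * Real.exp (L m₁ - L m₀ - 7 * δ) := by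
        rw [← Real.exp_add, harith]
      calc Real.exp (L m - L m₀ - 8 * δ) * vnorm (dblock A 0 m₀ *ᵥ v₀)
          = Real.exp (-(L m₁ - L m + δ)) *
            (Real.exp (L m₁ - L m₀ - 7 * δ) * vnorm (dblock A 0 m₀ *ᵥ v₀)) := by
            rw [hfb, mul_assoc]
        _ ≤ Real.exp (-(L m₁ - L m + δ)) * vnorm (dblock A 0 m₁ *ᵥ v₀) :=
            mul_le_mul_of_nonneg_left hend (le_of_lt (Real.exp_pos _))
        _ ≤ vnorm (dblock A 0 m *ᵥ v₀) := hstep3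
  -- convert to logs
  rw [abs_le]
  constructor
  · have h12 := Real.log_le_log (by positivity) hlow
    rw [Real.log_mul (Real.exp_ne_zero _) (ne_of_gt hYpos), Real.log_exp] at h12
    linarith
  · have h13 := Real.log_le_log hXpos (hUm m hm0 hm1)
    rw [Real.log_mul (Real.exp_ne_zero _) (ne_of_gt hYpos), Real.log_exp] at h13
    linarith
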